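/- In the mixed-measure setting, let h : I → ℝ be nonnegative, measurable and λ-integrable, fix d₀ ∈ {1, …, D}, and let (A_n) be a decreasing sequence of intervals with A_n ⊆ I, t_{d₀} ∈ A_n for all n, and ⋂_n A_n = {t_{d₀}}. Then the ratio (∫_{A_n} h dμ) / μ(A_n) converges to h(t_{d₀}) as n → ∞. In particular, at an atom of the mixed reference measure, the density value h(t_{d₀}) is the limit of probability-to-measure ratios of shrinking neighborhoods. -/

import Mathlib

open MeasureTheory
open scoped Classical

/-- The mixed reference measure `μ = Σ_d w_d δ_{t_d} + λ`, where `λ` is Lebesgue measure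
restricted to `I`. -/
noncomputable def mixedMeasure (I : Set ℝ) (n : ℕ) (t : Fin n → ℝ) (w : Fin n → ℝ) :
    Measure ℝ :=
  (∑ d, ENNReal.ofReal (w d) • Measure.dirac (t d)) + volume.restrict I

/-- In the mixed-measure setting, for a nonnegative, measurable, Lebesgue-integrable `h` and a
decreasing sequence of intervals `A_m ⊆ I` containing the atom `t_{d₀}` and shrinking to
`{t_{d₀}}`, the ratio `(∫_{A_m} h dμ) / μ(A_m)` converges to the density value `h(t_{d₀})`. -/
theorem density_value_at_atom_is_limit_of_ratios
    (I : Set ℝ) (hImeas : MeasurableSet I) (hIconn : I.OrdConnected)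
    (hI0 : 0 < volume I) (hIfin : volume I < ⊤)
    (n : ℕ) (t : Fin n → ℝ) (htinj : Function.Injective t) (htI : ∀ d, t d ∈ I)
    (w : Fin n → ℝ) (hw : ∀ d, 0 < w d)
    (h : ℝ → ℝ) (hmeas : Measurable h) (hnn : ∀ x ∈ I, 0 ≤ h x)
    (hint : IntegrableOn h I volume)
    (d₀ : Fin n)
    (A : ℕ → Set ℝ) (hA : Antitone A) (hAI : ∀ m, A m ⊆ I)
    (hAconn : ∀ m, (A m).OrdConnected) (hAmem : ∀ m, t d₀ ∈ A m)
    (hAcap : ⋂ m, A m = {t d₀}) :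
    Filter.Tendsto
      (fun m => (∫ x in A m, h x ∂(mixedMeasure I n t w)) /
        ((mixedMeasure I n t w) (A m)).toReal)
      Filter.atTop (nhds (h (t d₀))) := by
  classical
  set μ := mixedMeasure I n t w with hμdef
  have hAmeas : ∀ m, MeasurableSet (A m) := fun m => (hAconn m).measurableSet
  have hvolA : ∀ m, volume (A m) ≤ volume I := fun m => measure_mono (hAI m)
  -- eventually no other atoms lie in `A m`
  have key : ∀ d : Fin n, d ≠ d₀ → ∃ M, ∀ m, M ≤ m → t d ∉ A m := by
    intro d hd
    by_contra hc
    push_neg at hc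
    have hall : ∀ M, t d ∈ A M := fun M => by
      obtain ⟨m, hm, hmem⟩ := hc M
      exact hA hm hmem
    have hmem : t d ∈ ⋂ m, A m := Set.mem_iInter.2 hall
    rw [hAcap] at hmem
    exact hd (htinj hmem)
  choose! M hM using key
  set M0 : ℕ := Finset.univ.sup M with hM0
  have hM0' : ∀ m, M0 ≤ m → ∀ d, d ≠ d₀ → t d ∉ A m := fun m hm d hd =>
    hM d hd m (le_trans (Finset.le_sup (Finset.mem_univ d)) hm)
  -- the restriction of μ to A m for large m
  have hsum_res : ∀ m, ((∑ d, ENNReal.ofReal (w d) • Measure.dirac (t d)) :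
      Measure ℝ).restrict (A m)
      = ∑ d, (ENNReal.ofReal (w d) • Measure.dirac (t d)).restrict (A m) := by
    intro m
    ext u hu
    simp [Measure.restrict_apply hu, Measure.finset_sum_apply]
  have hres : ∀ m, M0 ≤ m → μ.restrict (A m)
      = ENNReal.ofReal (w d₀) • Measure.dirac (t d₀) + volume.restrict (A m) := by
    intro m hm
    rw [hμdef, mixedMeasure, Measure.restrict_add, hsum_res m,
      Measure.restrict_restrict (hAmeas m), Set.inter_eq_left.mpr (hAI m)]
    congr 1
    rw [Finset.sum_eq_single d₀]
    · rw [Measure.restrict_smul, restrict_dirac' (hAmeas m), if_pos (hAmem m)]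
    · intro d _ hd
      rw [Measure.restrict_smul, restrict_dirac' (hAmeas m),
        if_neg (hM0' m hm d hd), smul_zero]
    · intro hcon; exact absurd (Finset.mem_univ d₀) hcon
  -- numerator formula
  have hdirac_int : Integrable h (Measure.dirac (t d₀)) := by
    refine ⟨hmeas.aestronglyMeasurable, ?_⟩
    rw [HasFiniteIntegral, lintegral_dirac]
    exact ENNReal.coe_lt_top
  have hnum : ∀ m, M0 ≤ m →
      ∫ x in A m, h x ∂μ = w d₀ * h (t d₀) + ∫ x in A m, h x := by
    intro m hm
    rw [show (∫ x in A m, h x ∂μ) = ∫ x, h x ∂(μ.restrict (A m)) from rfl, hres m hm,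
      integral_add_measure (hdirac_int.smul_measure ENNReal.ofReal_ne_top)
        (hint.mono_set (hAI m)),
      integral_smul_measure, integral_dirac, ENNReal.toReal_ofReal (hw d₀).le,
      smul_eq_mul]
  -- denominator formula
  have hden : ∀ m, M0 ≤ m → (μ (A m)).toReal = w d₀ + (volume (A m)).toReal := by
    intro m hm
    have h1 : μ (A m) = μ.restrict (A m) Set.univ := by
      rw [Measure.restrict_apply_univ]
    rw [h1, hres m hm, Measure.add_apply, Measure.smul_apply, Measure.dirac_apply_of_mem
      (Set.mem_univ _), Measure.restrict_apply_univ, smul_eq_mul, mul_one,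
      ENNReal.toReal_add ENNReal.ofReal_ne_top ((hvolA m).trans_lt hIfin).ne,
      ENNReal.toReal_ofReal (hw d₀).le]
  -- limits
  have hvol0 : Filter.Tendsto (fun m => volume (A m)) Filter.atTop (nhds 0) := by
    have := tendsto_measure_iInter_atTop (μ := volume)
      (fun m => (hAmeas m).nullMeasurableSet) hA ⟨0, ((hvolA 0).trans_lt hIfin).ne⟩
    rw [hAcap] at this
    simpa [Function.comp_def] using this
  have hvolR : Filter.Tendsto (fun m => (volume (A m)).toReal) Filter.atTop (nhds 0) := by
    have := (ENNReal.tendsto_toReal (by simp : (0 : ENNReal) ≠ ⊤)).comp hvol0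
    simpa [Function.comp_def] using this
  have hint0 : Filter.Tendsto (fun m => ∫ x in A m, h x) Filter.atTop (nhds 0) := by
    have := tendsto_setIntegral_of_antitone (f := h) (μ := volume) hAmeas hA
      ⟨0, hint.mono_set (hAI 0)⟩
    rw [hAcap, show (volume.restrict {t d₀} : Measure ℝ) = 0 from
      Measure.restrict_eq_zero.mpr (by simp), integral_zero_measure] at this
    exact this
  have h1 : Filter.Tendsto (fun m => w d₀ * h (t d₀) + ∫ x in A m, h x)
      Filter.atTop (nhds (w d₀ * h (t d₀))) := by
    simpa using tendsto_const_nhds.add hint0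
  have h2 : Filter.Tendsto (fun m => w d₀ + (volume (A m)).toReal)
      Filter.atTop (nhds (w d₀)) := by
    simpa using tendsto_const_nhds.add hvolR
  have hlim := h1.div h2 (hw d₀).ne'
  rw [mul_div_cancel_left₀ _ (hw d₀).ne'] at hlim
  apply hlim.congr'
  filter_upwards [Filter.eventually_ge_atTop M0] with m hm
  simp only [Pi.div_apply]
  rw [hnum m hm, hden m hm]
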